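/- arXiv:1710.11343 — 9 statements merged into one kernel-verified Lean document; each statement's English description precedes it below -/
import Mathlib

section
/- Let X be a finite set and H : ℝ^X → ℝ^X an infinitesimal stochastic operator. Then for every t ≥ 0 the operator exp(tH) = ∑_{n=0}^∞ (tH)^n / n! is stochastic; in particular, t ↦ exp(tH) is a Markov semigroup. -/
open scoped BigOperators

noncomputable section

/-- The pushforward of vectors along a map of finite sets:
`(f_* v) b = ∑_{a : f a = b} v a`. -/
def pushforward {A B : Type} [Fintype A] [DecidableEq B] (f : A → B) :
    (A → ℝ) →ₗ[ℝ] (B → ℝ) where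
  toFun v := fun b => ∑ a ∈ Finset.univ.filter (fun a => f a = b), v a
  map_add' u v := by
    funext b
    simp [Finset.sum_add_distrib]
  map_smul' c v := by
    funext b
    simp [Finset.mul_sum]

/-- The pullback of vectors along a map of finite sets: `f^* v = v ∘ f`. -/
def pullback {A B : Type} (f : A → B) : (B → ℝ) →ₗ[ℝ] (A → ℝ) where
  toFun v := v ∘ f
  map_add' _ _ := rfl
  map_smul' _ _ := rfl

/-- A probability distribution on a finite set: nonnegative components summing to 1. -/
def IsProbDist {A : Type} [Fintype A] (v : A → ℝ) : Prop :=
  (∀ a, 0 ≤ v a) ∧ ∑ a, v a = 1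

/-- A linear operator is stochastic if it maps probability distributions to
probability distributions. -/
def IsStochasticOp {A B : Type} [Fintype A] [Fintype B]
    (T : (A → ℝ) →ₗ[ℝ] (B → ℝ)) : Prop :=
  ∀ v, IsProbDist v → IsProbDist (T v)

/-- An operator `H` is infinitesimal stochastic if its off-diagonal matrix entries
`H_{ij} = (H e_j) i` are nonnegative and each column sums to zero. -/
def IsInfinitesimalStochastic {A : Type} [Fintype A] [DecidableEq A]
    (H : (A → ℝ) →ₗ[ℝ] (A → ℝ)) : Prop :=
  (∀ i j, i ≠ j → 0 ≤ H (Pi.single j 1) i) ∧ ∀ j, ∑ i, H (Pi.single j 1) i = 0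

/-- A stochastic section for `p : X → X'` is a stochastic operator
`s : ℝ^{X'} → ℝ^X` with `p_* ∘ s = 1`. -/
def IsStochasticSection {X X' : Type} [Fintype X] [Fintype X'] [DecidableEq X']
    (p : X → X') (s : (X' → ℝ) →ₗ[ℝ] (X → ℝ)) : Prop :=
  IsStochasticOp s ∧ pushforward p ∘ₗ s = LinearMap.id

/-- A matrix is stochastic if it maps probability distributions to probability
distributions. -/
def IsStochasticMat {A B : Type} [Fintype A] [Fintype B] (T : Matrix B A ℝ) : Prop :=
  ∀ v, IsProbDist v → IsProbDist (T.mulVec v)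

/-- A matrix is infinitesimal stochastic if its off-diagonal entries are nonnegative
and its columns sum to zero. -/
def IsInfStochMat {A : Type} [Fintype A] (H : Matrix A A ℝ) : Prop :=
  (∀ i j, i ≠ j → 0 ≤ H i j) ∧ ∀ j, ∑ i, H i j = 0

/-- A Markov semigroup: a continuous one-parameter semigroup of stochastic matrices. -/
def IsMarkovSemigroup {A : Type} [Fintype A] [DecidableEq A] (U : ℝ → Matrix A A ℝ) : Prop :=
  (∀ t : ℝ, 0 ≤ t → IsStochasticMat (U t)) ∧ U 0 = 1 ∧
    (∀ s t : ℝ, 0 ≤ s → 0 ≤ t → U (s + t) = U s * U t) ∧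
    ∀ v : A → ℝ, ContinuousOn (fun t => (U t).mulVec v) (Set.Ici 0)

/-- The (matrix of the) pushforward along `f`. -/
def pushMat {A B : Type} [DecidableEq B] (f : A → B) : Matrix B A ℝ :=
  Matrix.of fun b a => if f a = b then 1 else 0

/-- A commuting square of maps that is a pullback: every compatible pair has a
unique common preimage. -/
def IsPullbackSquare {A B C D : Type} (f : A → B) (g : A → C) (h : B → D) (k : C → D) : Prop :=
  (∀ a, h (f a) = k (g a)) ∧ ∀ (b : B) (c : C), h b = k c → ∃! a, f a = b ∧ g a = c

/-- A commuting square of maps satisfying the universal property of a pushout. -/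
def IsPushoutSquare {T X Y Z : Type} (o : T → X) (i' : T → Y) (j : X → Z) (k : Y → Z) : Prop :=
  (∀ t, j (o t) = k (i' t)) ∧
    ∀ (W : Type) (u : X → W) (u' : Y → W), (∀ t, u (o t) = u' (i' t)) →
      ∃! w : Z → W, (∀ x, w (j x) = u x) ∧ ∀ y, w (k y) = u' y

/-- The black-boxing of an open Markov process `S → (X,H) ← T`: the set of
steady-state boundary data `(i^* v, I, o^* v, O)`. -/
def blackBox {S X T : Type} [Fintype S] [Fintype T] [DecidableEq X]
    (i : S → X) (o : T → X) (H : (X → ℝ) →ₗ[ℝ] (X → ℝ)) :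
    Set ((S → ℝ) × (S → ℝ) × (T → ℝ) × (T → ℝ)) :=
  {w | ∃ (v : X → ℝ) (I : S → ℝ) (O : T → ℝ),
    H v + pushforward i I - pushforward o O = 0 ∧
    w = (pullback i v, I, pullback o v, O)}

/-- The direct sum of two operators, under the canonical identification
`ℝ^{X ⊕ Y} ≃ ℝ^X ⊕ ℝ^Y`. -/
def dsum {A B : Type} (H : (A → ℝ) →ₗ[ℝ] (A → ℝ)) (G : (B → ℝ) →ₗ[ℝ] (B → ℝ)) :
    (A ⊕ B → ℝ) →ₗ[ℝ] (A ⊕ B → ℝ) :=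
  (LinearEquiv.sumArrowLequivProdArrow A B ℝ ℝ).symm.toLinearMap ∘ₗ
    (H.prodMap G) ∘ₗ (LinearEquiv.sumArrowLequivProdArrow A B ℝ ℝ).toLinearMap

lemma matExp_hasSum {X : Type} [Fintype X] [DecidableEq X] (A : Matrix X X ℝ) :
    HasSum (fun n : ℕ => ((n.factorial : ℝ))⁻¹ • A ^ n) (NormedSpace.exp A) := by
  letI : SeminormedRing (Matrix X X ℝ) := Matrix.linftyOpSemiNormedRing
  letI : NormedRing (Matrix X X ℝ) := Matrix.linftyOpNormedRing
  letI : NormedAlgebra ℝ (Matrix X X ℝ) := Matrix.linftyOpNormedAlgebra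
  exact NormedSpace.exp_series_hasSum_exp' (𝕂 := ℝ) A

lemma matExp_continuous {X : Type} [Fintype X] [DecidableEq X] :
    Continuous (NormedSpace.exp : Matrix X X ℝ → Matrix X X ℝ) := by
  letI : SeminormedRing (Matrix X X ℝ) := Matrix.linftyOpSemiNormedRing
  letI : NormedRing (Matrix X X ℝ) := Matrix.linftyOpNormedRing
  letI : NormedAlgebra ℝ (Matrix X X ℝ) := Matrix.linftyOpNormedAlgebra
  exact continuous_iff_continuousAt.2 fun x => (NormedSpace.exp_analytic (𝕂 := ℝ) x).continuousAt

lemma matExp_entry_hasSum {X : Type} [Fintype X] [DecidableEq X] (A : Matrix X X ℝ) (i j : X) :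
    HasSum (fun n : ℕ => ((n.factorial : ℝ))⁻¹ * (A ^ n) i j) (NormedSpace.exp A i j) := by
  have h := (matExp_hasSum A).map
    ((Pi.evalAddMonoidHom (fun _ : X => ℝ) j).comp
      (Pi.evalAddMonoidHom (fun _ : X => X → ℝ) i))
    (by exact ((continuous_apply j).comp (continuous_apply (A := fun _ : X => X → ℝ) i) : _))
  exact h

lemma pow_entry_nonneg {X : Type} [Fintype X] [DecidableEq X] {A : Matrix X X ℝ}
    (hA : ∀ i j, 0 ≤ A i j) (n : ℕ) : ∀ i j, 0 ≤ (A ^ n) i j := by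
  induction n with
  | zero => intro i j; simp [Matrix.one_apply]; positivity
  | succ n ih =>
      intro i j
      rw [pow_succ, Matrix.mul_apply]
      exact Finset.sum_nonneg fun k _ => mul_nonneg (ih i k) (hA k j)

lemma matExp_entry_nonneg {X : Type} [Fintype X] [DecidableEq X] {A : Matrix X X ℝ}
    (hA : ∀ i j, 0 ≤ A i j) (i j : X) : 0 ≤ NormedSpace.exp A i j :=
  (matExp_entry_hasSum A i j).nonneg fun n =>
    mul_nonneg (by positivity) (pow_entry_nonneg hA n i j)

lemma pow_colsum {X : Type} [Fintype X] [DecidableEq X] {A : Matrix X X ℝ}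
    (hA : ∀ j, ∑ i, A i j = 0) (n : ℕ) (j : X) :
    ∑ i, (A ^ n) i j = if n = 0 then 1 else 0 := by
  induction n generalizing j with
  | zero => simp [Matrix.one_apply, Finset.sum_ite_eq]
  | succ n ih =>
      simp only [Nat.succ_ne_zero, if_false]
      rw [pow_succ']
      simp only [Matrix.mul_apply]
      rw [Finset.sum_comm]
      have : ∀ k, ∑ i, A i k * (A ^ n) k j = 0 := by
        intro k; rw [← Finset.sum_mul, hA k, zero_mul]
      simp [this]

lemma matExp_colsum {X : Type} [Fintype X] [DecidableEq X] {A : Matrix X X ℝ}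
    (hA : ∀ j, ∑ i, A i j = 0) (j : X) : ∑ i, NormedSpace.exp A i j = 1 := by
  have h : HasSum (fun n : ℕ => ∑ i, ((n.factorial : ℝ))⁻¹ * (A ^ n) i j)
      (∑ i, NormedSpace.exp A i j) :=
    hasSum_sum fun i _ => matExp_entry_hasSum A i j
  have heq : (fun n : ℕ => ∑ i, ((n.factorial : ℝ))⁻¹ * (A ^ n) i j)
      = fun n : ℕ => if n = 0 then 1 else 0 := by
    funext n
    rw [← Finset.mul_sum, pow_colsum hA]
    cases n <;> simp
  rw [heq] at h
  have h1 : HasSum (fun n : ℕ => if n = 0 then (1:ℝ) else 0) 1 := by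
    simpa using hasSum_ite_eq (0 : ℕ) (1 : ℝ)
  exact h.unique h1

lemma matExp_entry_nonneg' {X : Type} [Fintype X] [DecidableEq X]
    {H : Matrix X X ℝ} (hoff : ∀ i j, i ≠ j → 0 ≤ H i j) {t : ℝ} (ht : 0 ≤ t) (i j : X) :
    0 ≤ NormedSpace.exp (t • H) i j := by
  set c : ℝ := t * ∑ k, |H k k| with hc
  have hc0 : 0 ≤ c := mul_nonneg ht (Finset.sum_nonneg fun k _ => abs_nonneg _)
  set N : Matrix X X ℝ := t • H + c • 1 with hN
  have hNnn : ∀ i j, 0 ≤ N i j := by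
    intro a b
    simp only [hN, Matrix.add_apply, Matrix.smul_apply, Matrix.one_apply, smul_eq_mul]
    rcases eq_or_ne a b with rfl | hab
    · simp only [if_pos rfl, eq_self_iff_true, if_true, mul_one, hc]
      have h1 : |H a a| ≤ ∑ k, |H k k| :=
        Finset.single_le_sum (fun k _ => abs_nonneg (H k k)) (Finset.mem_univ a)
      nlinarith [neg_abs_le (H a a)]
    · simp only [if_neg hab, mul_zero, add_zero]
      exact mul_nonneg ht (hoff a b hab)
  have hdecomp : t • H = N + (-c) • (1 : Matrix X X ℝ) := by
    simp [hN, add_assoc, ← add_smul]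
  have hcomm : Commute N ((-c) • (1 : Matrix X X ℝ)) :=
    (Commute.one_right N).smul_right _
  have hdiag : (-c) • (1 : Matrix X X ℝ) = Matrix.diagonal (fun _ => -c) := by
    ext a b
    simp [Matrix.one_apply, Matrix.diagonal_apply, mul_ite]
  have hexp : NormedSpace.exp (t • H)
      = NormedSpace.exp N * Matrix.diagonal (fun _ : X => Real.exp (-c)) := by
    rw [hdecomp, Matrix.exp_add_of_commute N _ hcomm, hdiag, Matrix.exp_diagonal]
    congr 1
    rw [Pi.exp_def]
    funext k
    rw [← Real.exp_eq_exp_ℝ]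
  rw [hexp, Matrix.mul_diagonal]
  exact mul_nonneg (matExp_entry_nonneg hNnn i j) (Real.exp_nonneg _)

lemma matExp_stoch {X : Type} [Fintype X] [DecidableEq X]
    {H : Matrix X X ℝ} (hH : IsInfStochMat H) {t : ℝ} (ht : 0 ≤ t) :
    IsStochasticMat (NormedSpace.exp (t • H)) := by
  have hcol : ∀ j, ∑ i, (t • H) i j = 0 := by
    intro j
    simp only [Matrix.smul_apply, smul_eq_mul, ← Finset.mul_sum, hH.2 j, mul_zero]
  intro v hv
  constructor
  · intro b
    rw [Matrix.mulVec, dotProduct]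
    exact Finset.sum_nonneg fun a _ =>
      mul_nonneg (matExp_entry_nonneg' hH.1 ht b a) (hv.1 a)
  · simp only [Matrix.mulVec, dotProduct]
    rw [Finset.sum_comm]
    have : ∀ a, ∑ b, NormedSpace.exp (t • H) b a * v a = v a := by
      intro a
      rw [← Finset.sum_mul, matExp_colsum hcol a, one_mul]
    simp only [this]
    exact hv.2

/-- If `H` is infinitesimal stochastic then `exp (t • H)` is stochastic
for all `t ≥ 0`; in particular `t ↦ exp (t • H)` is a Markov semigroup. -/
theorem exp_isStochastic_of_infStoch {X : Type} [Fintype X] [DecidableEq X]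
    (H : Matrix X X ℝ) (hH : IsInfStochMat H) :
    (∀ t : ℝ, 0 ≤ t → IsStochasticMat (NormedSpace.exp (t • H))) ∧
      IsMarkovSemigroup (fun t => NormedSpace.exp (t • H)) := by
  refine ⟨fun t ht => matExp_stoch hH ht, fun t ht => matExp_stoch hH ht, ?_, ?_, ?_⟩
  · show NormedSpace.exp ((0:ℝ) • H) = 1
    rw [zero_smul, NormedSpace.exp_zero]
  · intro s t _ _
    show NormedSpace.exp ((s+t) • H) = _
    rw [add_smul]
    exact Matrix.exp_add_of_commute _ _ (((Commute.refl H).smul_left s).smul_right t)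
  · intro v
    apply Continuous.continuousOn
    have h1 : Continuous fun t : ℝ => NormedSpace.exp (t • H) :=
      matExp_continuous.comp (continuous_id.smul continuous_const)
    have hfun : (fun t : ℝ => (NormedSpace.exp (t • H)).mulVec v)
        = fun t : ℝ => fun i => ∑ j, NormedSpace.exp (t • H) i j * v j := by
      funext t i; rfl
    rw [hfun]
    apply continuous_pi
    intro i
    apply continuous_finset_sum
    intro j _
    have h2 : Continuous fun t : ℝ => NormedSpace.exp (t • H) i := by
      exact (continuous_apply (A := fun _ : X => X → ℝ) i).comp h1
    exact ((continuous_apply j).comp h2).mul continuous_const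

end
end

section
/- Let X be a finite set and U(t) : ℝ^X → ℝ^X a Markov semigroup. Then there is a unique infinitesimal stochastic operator H : ℝ^X → ℝ^X with U(t) = exp(tH) for all t ≥ 0, and H is given by Hv = (d/dt U(t)v)|_{t=0} for all v ∈ ℝ^X. -/
open scoped BigOperators

noncomputable section

/-! ### Auxiliary material for Statement 3 -/

section MarkovAux
open Set Filter MeasureTheory intervalIntegral NormedSpace Topology

variable {X : Type} [Fintype X] [DecidableEq X]

/-- The `L∞`-operator normed ring structure on matrices, with the topology replaced by the
standard matrix topology (so that it agrees with it reducibly). -/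
@[reducible] def matNormedRing : NormedRing (Matrix X X ℝ) :=
  { Matrix.linftyOpNormedRing with
    toPseudoMetricSpace :=
      (Matrix.linftyOpNormedRing (α := ℝ) (n := X)).toPseudoMetricSpace.replaceTopology rfl }

attribute [local instance] matNormedRing

/-- The corresponding normed algebra structure. -/
@[reducible] def matNormedAlgebra : NormedAlgebra ℝ (Matrix X X ℝ) :=
  { Matrix.instAlgebra with
    norm_smul_le := fun r M => (Matrix.linftyOpNormedAlgebra (R := ℝ) (α := ℝ) (n := X)).norm_smul_le r M }

attribute [local instance] matNormedAlgebra

/-- The induced normed `ℚ`-algebra structure. -/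
@[reducible] def matNormedAlgebraRat : NormedAlgebra ℚ (Matrix X X ℝ) :=
  { Matrix.instAlgebra with
    norm_smul_le := fun q M => by
      have h := norm_smul_le (q : ℝ) M
      rwa [Rat.norm_cast_real, Rat.cast_smul_eq_qsmul] at h }

attribute [local instance] matNormedAlgebraRat

theorem single_probDist (j : X) : IsProbDist (Pi.single j (1:ℝ)) := by
  constructor
  · intro a; by_cases h : a = j <;> simp [h, Pi.single_apply]
  · simp [Pi.single_apply]

theorem stoch_entry_nonneg {M : Matrix X X ℝ} (hM : IsStochasticMat M) (i j : X) :
    0 ≤ M i j := by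
  have h := (hM _ (single_probDist j)).1 i
  simpa [Matrix.mulVec_single] using h

theorem stoch_col_sum {M : Matrix X X ℝ} (hM : IsStochasticMat M) (j : X) :
    ∑ i, M i j = 1 := by
  have h := (hM _ (single_probDist j)).2
  simpa [Matrix.mulVec_single] using h

theorem markov_continuousOn (U : ℝ → Matrix X X ℝ)
    (hc : ∀ v : X → ℝ, ContinuousOn (fun t => (U t).mulVec v) (Set.Ici 0)) :
    ContinuousOn U (Ici 0) := by
  intro t ht
  have hentry : ∀ i j : X, ContinuousWithinAt (fun t => U t i j) (Ici 0) t := by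
    intro i j
    have h1 := (hc (Pi.single j 1) t ht)
    have h2 := ((continuous_apply i).continuousAt).comp_continuousWithinAt h1
    have h3 : ((fun w : X → ℝ => w i) ∘ fun t => (U t).mulVec (Pi.single j 1))
        = fun t => U t i j := by
      funext s; simp [Matrix.mulVec_single]
    rwa [h3] at h2
  exact tendsto_pi_nhds.2 fun i => tendsto_pi_nhds.2 fun j => hentry i j

/-- The key analytic lemma: a Markov semigroup has a right derivative `H` at `0`
and equals `exp (t • H)` on `[0, ∞)`. -/
theorem markov_exists (U : ℝ → Matrix X X ℝ) (hU : IsMarkovSemigroup U) :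
    ∃ H : Matrix X X ℝ, HasDerivWithinAt U H (Ici 0) 0 ∧
      ∀ t : ℝ, 0 ≤ t → U t = exp (t • H) := by
  obtain ⟨hstoch, hU0, hsemi, hcontv⟩ := hU
  have hcont : ContinuousOn U (Ici 0) := markov_continuousOn U hcontv
  have hint : ∀ b : ℝ, 0 ≤ b → IntervalIntegrable U volume 0 b := by
    intro b hb
    exact (hcont.mono (by rw [uIcc_of_le hb]; exact Icc_subset_Ici_self)).intervalIntegrable
  set V : ℝ → Matrix X X ℝ := fun t => ∫ s in (0:ℝ)..t, U s with hVdef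
  have hV0 : V 0 = 0 := intervalIntegral.integral_same
  have hmeas : ∀ b : ℝ, 0 ≤ b → StronglyMeasurableAtFilter U (𝓝[>] b) volume := by
    intro b hb
    obtain ⟨s, hs, hmeas⟩ := hcont.stronglyMeasurableAtFilter_nhdsWithin measurableSet_Ici b
    exact ⟨s, nhdsWithin_mono b (Ioi_subset_Ici hb) hs, hmeas⟩
  have hVder : ∀ b : ℝ, 0 ≤ b → HasDerivWithinAt V (U b) (Ici b) b := by
    intro b hb
    exact intervalIntegral.integral_hasDerivWithinAt_right (hint b hb) (hmeas b hb)
      ((hcont b hb).mono (Ioi_subset_Ici hb))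
  -- slope limits
  have hslopeV : ∀ b : ℝ, 0 ≤ b →
      Tendsto (slope V b) (𝓝[>] b) (𝓝 (U b)) := by
    intro b hb
    have := (hVder b hb)
    rw [hasDerivWithinAt_iff_tendsto_slope, Ici_sdiff_left] at this
    exact this
  have hT2 : Tendsto (fun h : ℝ => slope V 0 h) (𝓝[>] 0) (𝓝 1) := by
    have := hslopeV 0 le_rfl
    rwa [hU0] at this
  -- pick t₀
  have hev : ∀ᶠ h in 𝓝[>] (0:ℝ), ‖slope V 0 h - 1‖ < 1 := by
    have h' : Tendsto (fun h : ℝ => slope V 0 h - 1) (𝓝[>] 0) (𝓝 (1 - 1)) :=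
      hT2.sub (tendsto_const_nhds (x := (1 : Matrix X X ℝ)))
    rw [sub_self] at h'
    have h'' : Tendsto (fun h : ℝ => ‖slope V 0 h - 1‖) (𝓝[>] 0) (𝓝 0) := by
      simpa using h'.norm
    exact (h''.eventually (eventually_lt_nhds zero_lt_one))
  obtain ⟨t₀, ht₀, ht₀pos⟩ := (hev.and (eventually_mem_nhdsWithin)).exists
  rw [mem_Ioi] at ht₀pos
  have ht₀' : (0:ℝ) ≤ t₀ := ht₀pos.le
  -- V t₀ is a unit
  have hunit : IsUnit (V t₀) := by
    have h1 : IsUnit (slope V 0 t₀) := by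
      have := (Units.oneSub (1 - slope V 0 t₀)
        (by rwa [norm_sub_rev] at ht₀)).isUnit
      simpa using this
    have h2 : V t₀ = t₀ • slope V 0 t₀ := by
      rw [slope_def_module]
      rw [hV0, sub_zero, sub_zero, smul_smul, mul_inv_cancel₀ (ne_of_gt ht₀pos), one_smul]
    rw [h2, Algebra.smul_def]
    exact (IsUnit.map (algebraMap ℝ (Matrix X X ℝ)) (isUnit_iff_ne_zero.2 (ne_of_gt ht₀pos))).mul h1
  obtain ⟨w, hw⟩ := hunit
  -- key identity
  have key : ∀ h : ℝ, 0 ≤ h → U h * V t₀ = V (t₀ + h) - V h := by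
    intro h hh
    have e1 : U h * V t₀ = ∫ s in (0:ℝ)..t₀, U h * U s := by
      have := ContinuousLinearMap.intervalIntegral_comp_comm
        (ContinuousLinearMap.mul ℝ (Matrix X X ℝ) (U h)) (hint t₀ ht₀')
      simp [ContinuousLinearMap.mul_apply'] at this
      exact this.symm
    have e2 : (∫ s in (0:ℝ)..t₀, U h * U s) = ∫ s in (0:ℝ)..t₀, U (s + h) := by
      apply intervalIntegral.integral_congr
      intro s hs
      rw [uIcc_of_le ht₀'] at hs
      show U h * U s = U (s + h)
      rw [add_comm s h, hsemi h s hh hs.1]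
    have e3 : (∫ s in (0:ℝ)..t₀, U (s + h)) = ∫ s in h..(t₀ + h), U s := by
      simpa using intervalIntegral.integral_comp_add_right (a := (0:ℝ)) (b := t₀) U h
    have e4 : (∫ s in h..(t₀ + h), U s) = V (t₀ + h) - V h := by
      exact (intervalIntegral.integral_interval_sub_left
        (hint (t₀ + h) (by positivity)) (hint h hh)).symm
    rw [e1, e2, e3, e4]
  -- tendsto of slope U 0 times V t₀
  have hshift : Tendsto (fun h : ℝ => t₀ + h) (𝓝[>] (0:ℝ)) (𝓝[>] t₀) := by
    rw [tendsto_nhdsWithin_iff]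
    constructor
    · have h0 : Continuous (fun h : ℝ => t₀ + h) := continuous_const.add continuous_id
      have h1 : Tendsto (fun h : ℝ => t₀ + h) (𝓝 0) (𝓝 t₀) := by
        simpa using h0.tendsto (0:ℝ)
      exact h1.mono_left nhdsWithin_le_nhds
    · exact eventually_nhdsWithin_of_forall fun x hx => by
        simpa using (lt_add_of_pos_right t₀ hx)
  have hT1 : Tendsto (fun h : ℝ => slope V t₀ (t₀ + h)) (𝓝[>] 0) (𝓝 (U t₀)) :=
    (hslopeV t₀ ht₀').comp hshift
  have hT12 : Tendsto (fun h : ℝ => slope U 0 h * V t₀) (𝓝[>] 0) (𝓝 (U t₀ - 1)) := by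
    have heq : ∀ᶠ h in 𝓝[>] (0:ℝ),
        slope V t₀ (t₀ + h) - slope V 0 h = slope U 0 h * V t₀ := by
      refine eventually_nhdsWithin_of_forall fun h hh => ?_
      rw [mem_Ioi] at hh
      have hkey := key h hh.le
      simp only [slope_def_module, hV0, hU0, sub_zero]
      rw [add_sub_cancel_left, smul_mul_assoc, Matrix.sub_mul, hkey, one_mul, ← smul_sub]
      congr 1
      abel
    exact (hT1.sub hT2).congr' heq
  set H : Matrix X X ℝ := (U t₀ - 1) * (w⁻¹ : (Matrix X X ℝ)ˣ) with hHdef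
  have hHlim : Tendsto (slope U 0) (𝓝[>] 0) (𝓝 H) := by
    have hcontm : Continuous fun M : Matrix X X ℝ => M * (w⁻¹ : (Matrix X X ℝ)ˣ) :=
      continuous_mul_right _
    have := (hcontm.tendsto (U t₀ - 1)).comp hT12
    have heq : (fun h : ℝ => slope U 0 h * V t₀ * (w⁻¹ : (Matrix X X ℝ)ˣ)) = slope U 0 := by
      funext h
      rw [← hw, Units.mul_inv_cancel_right]
    rwa [Function.comp_def, heq] at this
  have hH0 : HasDerivWithinAt U H (Ici 0) 0 := by
    rw [hasDerivWithinAt_iff_tendsto_slope, Ici_sdiff_left]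
    exact hHlim
  refine ⟨H, hH0, ?_⟩
  -- derivative everywhere on the right
  have hder : ∀ t : ℝ, 0 ≤ t → HasDerivWithinAt U (H * U t) (Ici t) t := by
    intro t ht
    have h1 : HasDerivWithinAt (fun h : ℝ => U h * U t) (H * U t) (Ici 0) 0 :=
      hH0.mul_const _
    have h2 : HasDerivWithinAt (fun h : ℝ => U (h + t)) (H * U t) (Ici 0) 0 := by
      apply h1.congr
      · intro h hh
        exact (hsemi h t hh ht)
      · rw [zero_add, hU0, one_mul]
    have h3 := h2.scomp_of_eq t ((hasDerivWithinAt_id t (Ici t)).sub_const t)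
      (fun s hs => by simpa using sub_nonneg.2 (show t ≤ s from hs)) (by simp)
    simpa [Function.comp_def] using h3
  -- conclude exp formula
  intro t ht
  have hEU : exp (t • (-H)) * U t = 1 := by
    have hmain := constant_of_has_deriv_right_zero
      (f := fun s : ℝ => exp (s • (-H)) * U s) (a := 0) (b := t) ?_ ?_ t
      (by rw [mem_Icc]; exact ⟨ht, le_rfl⟩)
    · simp only [zero_smul, exp_zero, hU0, one_mul] at hmain
      exact hmain
    · apply ContinuousOn.mul
      · exact (exp_continuous.comp (continuous_id.smul continuous_const)).continuousOn
      · exact hcont.mono (fun x hx => hx.1)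
    · intro s hs
      have hexp : HasDerivAt (fun u : ℝ => exp (u • (-H))) (exp (s • (-H)) * (-H)) s :=
        hasDerivAt_exp_smul_const (-H) s
      have hprod := (hexp.hasDerivWithinAt.mono (Ici_subset_Ici.2 hs.1 : Ici s ⊆ Ici 0)
        |>.mono (subset_refl _)).mul (hder s hs.1)
      have hzero : exp (s • (-H)) * (-H) * U s + exp (s • (-H)) * (H * U s) = 0 := by
        rw [mul_assoc, neg_mul, mul_neg, neg_add_cancel]
      rw [hzero] at hprod
      exact hprod.mono (fun x hx => hx)
  have hcomm : Commute (t • H) (t • (-H)) := by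
    rw [smul_neg]; exact (Commute.refl _).neg_right
  have h1 : exp (t • H) * exp (t • (-H)) = 1 := by
    rw [← exp_add_of_commute hcomm, smul_neg, add_neg_cancel, exp_zero]
  calc U t = (exp (t • H) * exp (t • (-H))) * U t := by rw [h1, one_mul]
    _ = exp (t • H) * (exp (t • (-H)) * U t) := mul_assoc _ _ _
    _ = exp (t • H) := by rw [hEU, mul_one]

/-- Right derivative at `0` of `t ↦ exp (t • H)`, matched with `U`. -/
theorem exp_hasDerivWithinAt (U : ℝ → Matrix X X ℝ) (hU0 : U 0 = 1)
    (H : Matrix X X ℝ) (hexp : ∀ t : ℝ, 0 ≤ t → U t = exp (t • H)) :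
    HasDerivWithinAt U H (Ici 0) 0 := by
  have h1 : HasDerivAt (fun t : ℝ => exp (t • H)) H 0 := by
    have := hasDerivAt_exp_smul_const H (0:ℝ)
    simpa using this
  exact h1.hasDerivWithinAt.congr (fun t ht => hexp t ht)
    (by rw [hU0, zero_smul, exp_zero])

/-- The generator of a Markov semigroup is infinitesimal stochastic. -/
theorem generator_infStoch (U : ℝ → Matrix X X ℝ) (hU : IsMarkovSemigroup U)
    (H : Matrix X X ℝ) (hH : HasDerivWithinAt U H (Ici 0) 0) : IsInfStochMat H := by
  obtain ⟨hstoch, hU0, _, _⟩ := hU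
  have hHlim : Tendsto (slope U 0) (𝓝[>] 0) (𝓝 H) := by
    rw [hasDerivWithinAt_iff_tendsto_slope, Ici_sdiff_left] at hH
    exact hH
  have hentry : ∀ i j : X, Tendsto (fun h => slope U 0 h i j) (𝓝[>] (0:ℝ)) (𝓝 (H i j)) := by
    intro i j
    have hc : Continuous fun M : Matrix X X ℝ => M i j :=
      (continuous_apply j).comp (continuous_apply i)
    exact (hc.tendsto H).comp hHlim
  constructor
  · intro i j hij
    refine ge_of_tendsto (hentry i j) ?_
    refine eventually_nhdsWithin_of_forall fun h hh => ?_
    rw [mem_Ioi] at hh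
    have hnn : 0 ≤ U h i j := stoch_entry_nonneg (hstoch h hh.le) i j
    have : slope U 0 h i j = h⁻¹ * (U h i j - (1 : Matrix X X ℝ) i j) := by
      rw [slope_def_module, hU0, sub_zero]
      simp [Matrix.smul_apply, Matrix.sub_apply]
    rw [this, Matrix.one_apply_ne hij, sub_zero]
    positivity
  · intro j
    have hsum : Tendsto (fun h => ∑ i, slope U 0 h i j) (𝓝[>] (0:ℝ)) (𝓝 (∑ i, H i j)) :=
      tendsto_finset_sum _ fun i _ => hentry i j
    have hzero : ∀ᶠ h in 𝓝[>] (0:ℝ), (∑ i, slope U 0 h i j) = 0 := by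
      refine eventually_nhdsWithin_of_forall fun h hh => ?_
      rw [mem_Ioi] at hh
      have hcol : ∑ i, U h i j = 1 := stoch_col_sum (hstoch h hh.le) j
      have : ∀ i, slope U 0 h i j = h⁻¹ * (U h i j - (1 : Matrix X X ℝ) i j) := by
        intro i
        rw [slope_def_module, hU0, sub_zero]
        simp [Matrix.smul_apply, Matrix.sub_apply]
      rw [Finset.sum_congr rfl (fun i _ => this i), ← Finset.mul_sum, Finset.sum_sub_distrib,
        hcol]
      simp [Matrix.one_apply]
    have h2 := hsum.congr' hzero
    exact tendsto_nhds_unique h2 tendsto_const_nhds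

/-- The continuous linear map `M ↦ M.mulVec v`. -/
def mulVecCLM (v : X → ℝ) : Matrix X X ℝ →L[ℝ] (X → ℝ) :=
  LinearMap.toContinuousLinearMap
    { toFun := fun M : Matrix X X ℝ => M.mulVec v
      map_add' := fun M N => Matrix.add_mulVec M N v
      map_smul' := fun c M => Matrix.smul_mulVec c M v }

theorem mulVec_hasDerivWithinAt (U : ℝ → Matrix X X ℝ) (H : Matrix X X ℝ)
    (hH : HasDerivWithinAt U H (Ici 0) 0) (v : X → ℝ) :
    HasDerivWithinAt (fun t => (U t).mulVec v) (H.mulVec v) (Ici 0) 0 :=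
  ((mulVecCLM v).hasFDerivAt).comp_hasDerivWithinAt 0 hH

theorem matDeriv_unique (U : ℝ → Matrix X X ℝ) (H H' : Matrix X X ℝ)
    (h1 : HasDerivWithinAt U H (Ici 0) 0) (h2 : HasDerivWithinAt U H' (Ici 0) 0) :
    H = H' := by
  rw [← h1.derivWithin (uniqueDiffOn_Ici 0 0 self_mem_Ici),
    h2.derivWithin (uniqueDiffOn_Ici 0 0 self_mem_Ici)]

end MarkovAux

/-- Every Markov semigroup `U` is of the form `U t = exp (t • H)` for a
unique infinitesimal stochastic `H`, and this `H` is the derivative of `U` at `t = 0`. -/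
theorem markovSemigroup_generator {X : Type} [Fintype X] [DecidableEq X]
    (U : ℝ → Matrix X X ℝ) (hU : IsMarkovSemigroup U) :
    (∃! H : Matrix X X ℝ, IsInfStochMat H ∧
        ∀ t : ℝ, 0 ≤ t → U t = NormedSpace.exp (t • H)) ∧
      ∀ H : Matrix X X ℝ,
        (IsInfStochMat H ∧ ∀ t : ℝ, 0 ≤ t → U t = NormedSpace.exp (t • H)) →
          ∀ v : X → ℝ,
            HasDerivWithinAt (fun t => (U t).mulVec v) (H.mulVec v) (Set.Ici 0) 0 := by
  obtain ⟨H, hH0, hHexp⟩ := markov_exists U hU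
  have hinf := generator_infStoch U hU H hH0
  constructor
  · refine ⟨H, ⟨hinf, hHexp⟩, ?_⟩
    rintro H' ⟨hinf', hexp'⟩
    exact matDeriv_unique U H' H (exp_hasDerivWithinAt U hU.2.1 H' hexp') hH0
  · rintro H' ⟨hinf', hexp'⟩ v
    exact mulVec_hasDerivWithinAt U H' (exp_hasDerivWithinAt U hU.2.1 H' hexp') v

end
end

section
/- Let p : X → X' be a function between finite sets that admits a stochastic section s : ℝ^{X'} → ℝ^X, and let H : ℝ^X → ℝ^X be an infinitesimal stochastic operator. Then H' = p_* H s : ℝ^{X'} → ℝ^{X'} is also infinitesimal stochastic. -/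
open scoped BigOperators

noncomputable section

/-- If `p : X → X'` admits a stochastic section `s` and `H` is
infinitesimal stochastic, then `H' = p_* H s` is infinitesimal stochastic. -/
theorem pushforward_comp_section_infStoch {X X' : Type} [Fintype X] [Fintype X']
    [DecidableEq X] [DecidableEq X'] (p : X → X')
    (s : (X' → ℝ) →ₗ[ℝ] (X → ℝ)) (hs : IsStochasticSection p s)
    (H : (X → ℝ) →ₗ[ℝ] (X → ℝ)) (hH : IsInfinitesimalStochastic H) :
    IsInfinitesimalStochastic (pushforward p ∘ₗ H ∘ₗ s) := by
  obtain ⟨hsStoch, hsSec⟩ := hs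
  obtain ⟨hHoff, hHcol⟩ := hH
  -- expand H v at a coordinate as a sum over basis vectors
  have happly : ∀ (v : X → ℝ) (a : X), H v a = ∑ j, v j * H (Pi.single j 1) a := by
    intro v a
    have hv : v = ∑ j, v j • (Pi.single j 1 : X → ℝ) := by
      funext x
      simp [Pi.single_apply, Finset.sum_ite_eq', mul_comm]
    conv_lhs => rw [hv]
    rw [map_sum]
    simp [smul_eq_mul]
  -- e_j is a probability distribution
  have hprob : ∀ j : X', IsProbDist (Pi.single j 1 : X' → ℝ) := by
    intro j
    constructor
    · intro a; by_cases h : a = j <;> simp [Pi.single_apply, h]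
    · simp [Pi.single_apply]
  -- properties of w = s e_j
  have hwnn : ∀ (j : X') (x : X), 0 ≤ s (Pi.single j 1) x := fun j x =>
    (hsStoch _ (hprob j)).1 x
  have hsupp : ∀ (j : X') (x : X), p x ≠ j → s (Pi.single j 1) x = 0 := by
    intro j x hpx
    have h1 : pushforward p (s (Pi.single j 1)) = Pi.single j 1 := by
      have := congrArg (fun T => T (Pi.single j 1)) hsSec
      simpa using this
    have h2 : ∑ a ∈ Finset.univ.filter (fun a => p a = p x),
        s (Pi.single j 1) a = 0 := by
      have := congrFun h1 (p x)
      simpa [pushforward, Pi.single_apply, if_neg hpx] using this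
    have := (Finset.sum_eq_zero_iff_of_nonneg (fun a _ => hwnn j a)).1 h2 x
      (by simp)
    exact this
  constructor
  · intro i j hij
    simp only [LinearMap.comp_apply, pushforward, LinearMap.coe_mk, AddHom.coe_mk,
      Matrix.of_apply]
    apply Finset.sum_nonneg
    intro a ha
    have hpa : p a = i := by simpa using ha
    rw [happly]
    apply Finset.sum_nonneg
    intro k _
    by_cases hk : p k = j
    · have hak : a ≠ k := fun h => hij (by rw [← hpa, h, hk])
      exact mul_nonneg (hwnn j k) (hHoff a k hak)
    · simp [hsupp j k hk]
  · intro j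
    simp only [LinearMap.comp_apply, pushforward, LinearMap.coe_mk, AddHom.coe_mk]
    rw [← Finset.sum_biUnion]
    · have hcover : Finset.univ.biUnion
          (fun i => Finset.univ.filter (fun a => p a = i)) = (Finset.univ : Finset X) := by
        ext a; simp
      rw [hcover]
      have : ∑ a, H (s (Pi.single j 1)) a
          = ∑ a, ∑ k, s (Pi.single j 1) k * H (Pi.single k 1) a := by
        exact Finset.sum_congr rfl fun a _ => happly _ a
      rw [this, Finset.sum_comm]
      simp [← Finset.mul_sum, hHcol]
    · intro i _ i' _ hii'
      intro t hti hti' a hat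
      have h1 : p a = i := by simpa using (hti hat)
      have h2 : p a = i' := by simpa using (hti' hat)
      exact absurd (h1 ▸ h2) hii'

end
end

section
/- Let p : X → X' be a surjection of finite sets and let H be an infinitesimal stochastic operator on ℝ^X. Then the following are equivalent: (i) H is lumpable with respect to p (i.e., p_* H s is independent of the choice of stochastic section s for p); (ii) there exists a linear operator H' : ℝ^{X'} → ℝ^{X'} such that p_* H = H' p_*; (iii) p_* H e_j = p_* H e_{j'} for all j, j' ∈ X with p(j) = p(j'), where e_j denotes the standard basis vector of ℝ^X at j. -/
open scoped BigOperators

noncomputable section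

lemma pushforward_single {A B : Type} [Fintype A] [DecidableEq A] [DecidableEq B]
    (f : A → B) (j : A) : pushforward f (Pi.single j 1) = Pi.single (f j) 1 := by
  funext b
  simp only [pushforward, LinearMap.coe_mk, AddHom.coe_mk, Pi.single_apply]
  rw [Finset.sum_ite_eq' (Finset.univ.filter (fun a => f a = b)) j (fun _ => (1:ℝ))]
  simp [eq_comm]

lemma pushforward_stochastic {A B : Type} [Fintype A] [Fintype B] [DecidableEq B]
    (f : A → B) : IsStochasticOp (pushforward f) := by
  intro v hv
  constructor
  · intro b
    exact Finset.sum_nonneg fun a _ => hv.1 a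
  · show ∑ b, ∑ a ∈ Finset.univ.filter (fun a => f a = b), v a = 1
    rw [Finset.sum_fiberwise _ f v]; exact hv.2

lemma pushforward_section_comp {X X' : Type} [Fintype X] [Fintype X']
    [DecidableEq X] [DecidableEq X'] (p : X → X') (τ : X' → X)
    (hτ : ∀ x', p (τ x') = x') :
    pushforward p ∘ₗ pushforward τ = LinearMap.id := by
  apply Module.Basis.ext (Pi.basisFun ℝ X')
  intro j
  have hb : (Pi.basisFun ℝ X') j = Pi.single j 1 := by simp [Pi.basisFun_apply]
  rw [hb]
  simp [pushforward_single, hτ]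

/-- For a surjection `p : X → X'` and an infinitesimal stochastic `H` on
`ℝ^X`, the following are equivalent: (i) `p_* H s` is independent of the stochastic
section `s` (lumpability); (ii) there is `H'` with `p_* H = H' p_*`;
(iii) `p_* H e_j = p_* H e_{j'}` whenever `p j = p j'`. -/
theorem lumpability_iff {X X' : Type} [Fintype X] [Fintype X']
    [DecidableEq X] [DecidableEq X'] (p : X → X') (hp : Function.Surjective p)
    (H : (X → ℝ) →ₗ[ℝ] (X → ℝ)) (hH : IsInfinitesimalStochastic H) :
    ((∀ s s' : (X' → ℝ) →ₗ[ℝ] (X → ℝ), IsStochasticSection p s → IsStochasticSection p s' →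
        pushforward p ∘ₗ H ∘ₗ s = pushforward p ∘ₗ H ∘ₗ s') ↔
      ∃ H' : (X' → ℝ) →ₗ[ℝ] (X' → ℝ), pushforward p ∘ₗ H = H' ∘ₗ pushforward p) ∧
    ((∃ H' : (X' → ℝ) →ₗ[ℝ] (X' → ℝ), pushforward p ∘ₗ H = H' ∘ₗ pushforward p) ↔
      ∀ j j' : X, p j = p j' →
        pushforward p (H (Pi.single j 1)) = pushforward p (H (Pi.single j' 1))) := by
  obtain ⟨σ, hσ⟩ := hp.hasRightInverse
  -- (iii) → (ii)
  have h32 : (∀ j j' : X, p j = p j' →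
      pushforward p (H (Pi.single j 1)) = pushforward p (H (Pi.single j' 1))) →
      ∃ H' : (X' → ℝ) →ₗ[ℝ] (X' → ℝ), pushforward p ∘ₗ H = H' ∘ₗ pushforward p := by
    intro h3
    refine ⟨pushforward p ∘ₗ H ∘ₗ pushforward σ, ?_⟩
    apply Module.Basis.ext (Pi.basisFun ℝ X)
    intro j
    have hb : (Pi.basisFun ℝ X) j = Pi.single j 1 := by simp [Pi.basisFun_apply]
    rw [hb]
    simp only [LinearMap.comp_apply]
    rw [pushforward_single, pushforward_single]
    exact h3 j (σ (p j)) (by rw [hσ (p j)])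
  -- (ii) → (iii)
  have h23 : (∃ H' : (X' → ℝ) →ₗ[ℝ] (X' → ℝ), pushforward p ∘ₗ H = H' ∘ₗ pushforward p) →
      ∀ j j' : X, p j = p j' →
        pushforward p (H (Pi.single j 1)) = pushforward p (H (Pi.single j' 1)) := by
    rintro ⟨H', hH'⟩ j j' hjj'
    have h1 := LinearMap.congr_fun hH' (Pi.single j 1)
    have h2 := LinearMap.congr_fun hH' (Pi.single j' 1)
    simp only [LinearMap.comp_apply, pushforward_single] at h1 h2
    rw [h1, h2, hjj']
  -- (ii) → (i)
  have h21 : (∃ H' : (X' → ℝ) →ₗ[ℝ] (X' → ℝ), pushforward p ∘ₗ H = H' ∘ₗ pushforward p) →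
      ∀ s s' : (X' → ℝ) →ₗ[ℝ] (X → ℝ), IsStochasticSection p s → IsStochasticSection p s' →
        pushforward p ∘ₗ H ∘ₗ s = pushforward p ∘ₗ H ∘ₗ s' := by
    rintro ⟨H', hH'⟩ s s' hs hs'
    have key : ∀ t : (X' → ℝ) →ₗ[ℝ] (X → ℝ), IsStochasticSection p t →
        pushforward p ∘ₗ H ∘ₗ t = H' := by
      intro t ht
      rw [← LinearMap.comp_assoc, hH', LinearMap.comp_assoc, ht.2, LinearMap.comp_id]
    rw [key s hs, key s' hs']
  -- (i) → (iii)
  have h13 : (∀ s s' : (X' → ℝ) →ₗ[ℝ] (X → ℝ), IsStochasticSection p s →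
      IsStochasticSection p s' → pushforward p ∘ₗ H ∘ₗ s = pushforward p ∘ₗ H ∘ₗ s') →
      ∀ j j' : X, p j = p j' →
        pushforward p (H (Pi.single j 1)) = pushforward p (H (Pi.single j' 1)) := by
    intro h1 j j' hjj'
    set τ : X' → X := fun x' => if x' = p j then j else σ x' with hτdef
    set τ' : X' → X := fun x' => if x' = p j then j' else σ x' with hτ'def
    have hτsec : ∀ x', p (τ x') = x' := by
      intro x'; simp only [hτdef]; split
      · simp_all
      · exact hσ x'
    have hτ'sec : ∀ x', p (τ' x') = x' := by
      intro x'; simp only [hτ'def]; split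
      · simp_all
      · exact hσ x'
    have hs : IsStochasticSection p (pushforward τ) :=
      ⟨pushforward_stochastic τ, pushforward_section_comp p τ hτsec⟩
    have hs' : IsStochasticSection p (pushforward τ') :=
      ⟨pushforward_stochastic τ', pushforward_section_comp p τ' hτ'sec⟩
    have key := LinearMap.congr_fun (h1 _ _ hs hs') (Pi.single (p j) 1)
    simp only [LinearMap.comp_apply, pushforward_single] at key
    have hτj : τ (p j) = j := by simp [hτdef]
    have hτ'j : τ' (p j) = j' := by simp [hτ'def]
    rwa [hτj, hτ'j] at key
  exact ⟨⟨fun h => h32 (h13 h), h21⟩, ⟨h23, h32⟩⟩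


end
end

section
/- Let p : X → X' be a surjection of finite sets and let H be an infinitesimal stochastic operator on ℝ^X such that there exists a linear operator H' : ℝ^{X'} → ℝ^{X'} with p_* H = H' p_*. Then such an H' is unique, it equals p_* H s for any stochastic section s : ℝ^{X'} → ℝ^X of p, and it is infinitesimal stochastic. -/
open scoped BigOperators

noncomputable section

/-- If `p : X → X'` is surjective, `H` is infinitesimal stochastic, and
`H'` satisfies `p_* H = H' p_*`, then `H'` is unique, equals `p_* H s` for every
stochastic section `s` of `p`, and is infinitesimal stochastic. -/
theorem lumped_operator_unique {X X' : Type} [Fintype X] [Fintype X']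
    [DecidableEq X] [DecidableEq X'] (p : X → X') (hp : Function.Surjective p)
    (H : (X → ℝ) →ₗ[ℝ] (X → ℝ)) (hH : IsInfinitesimalStochastic H)
    (H' : (X' → ℝ) →ₗ[ℝ] (X' → ℝ))
    (hcomm : pushforward p ∘ₗ H = H' ∘ₗ pushforward p) :
    (∀ H'' : (X' → ℝ) →ₗ[ℝ] (X' → ℝ),
        pushforward p ∘ₗ H = H'' ∘ₗ pushforward p → H'' = H') ∧
    (∀ s : (X' → ℝ) →ₗ[ℝ] (X → ℝ), IsStochasticSection p s →
        H' = pushforward p ∘ₗ H ∘ₗ s) ∧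
    IsInfinitesimalStochastic H' := by
  classical
  have hpush : ∀ (v : X → ℝ) (b : X'),
      pushforward p v b = ∑ a ∈ Finset.univ.filter (fun a => p a = b), v a := fun _ _ => rfl
  have hsingle : ∀ x : X, pushforward p (Pi.single x 1) = Pi.single (p x) 1 := by
    intro x
    funext b
    rw [hpush]
    simp [Pi.single_apply, Finset.sum_ite_eq', eq_comm]
  have hsurj : Function.Surjective (pushforward p) := by
    intro w
    refine ⟨fun x => if x = Function.surjInv hp (p x) then w (p x) else 0, ?_⟩
    funext b
    rw [hpush]
    rw [Finset.sum_eq_single (Function.surjInv hp b)]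
    · simp [Function.surjInv_eq hp b]
    · intro a ha hne
      have hpa : p a = b := (Finset.mem_filter.mp ha).2
      simp [hpa, hne]
    · intro h
      exact absurd (by simp [Function.surjInv_eq hp b] :
        Function.surjInv hp b ∈ Finset.univ.filter (fun a => p a = b)) h
  have key : ∀ x : X, H' (Pi.single (p x) 1) = pushforward p (H (Pi.single x 1)) := by
    intro x
    rw [← hsingle x]
    exact (LinearMap.congr_fun hcomm (Pi.single x 1)).symm
  refine ⟨?_, ?_, ?_, ?_⟩
  · intro H'' h
    apply LinearMap.ext
    intro w
    obtain ⟨v, rfl⟩ := hsurj w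
    have h1 := LinearMap.congr_fun h v
    have h2 := LinearMap.congr_fun hcomm v
    simp only [LinearMap.comp_apply] at h1 h2
    rw [← h1, ← h2]
  · intro s hs
    have : H' ∘ₗ (pushforward p ∘ₗ s) = (pushforward p ∘ₗ H) ∘ₗ s := by
      rw [hcomm, LinearMap.comp_assoc]
    rw [hs.2, LinearMap.comp_id, LinearMap.comp_assoc] at this
    exact this
  · intro i' j' hne
    obtain ⟨j, rfl⟩ := hp j'
    rw [key j, hpush]
    apply Finset.sum_nonneg
    intro i hi
    have hpi : p i = i' := (Finset.mem_filter.mp hi).2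
    exact hH.1 i j (fun h => hne (by rw [← hpi, h]))
  · intro j'
    obtain ⟨j, rfl⟩ := hp j'
    have : ∑ i', H' (Pi.single (p j) 1) i'
        = ∑ i', ∑ i ∈ Finset.univ.filter (fun i => p i = i'), H (Pi.single j 1) i := by
      refine Finset.sum_congr rfl fun i' _ => ?_
      rw [key j, hpush]
    rw [this, Finset.sum_fiberwise]
    exact hH.2 j

end
end

section
/- Let f : X → Y be any map between finite sets. If H : ℝ^X → ℝ^X is infinitesimal stochastic, then f_* H f^* : ℝ^Y → ℝ^Y is infinitesimal stochastic. -/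
open scoped BigOperators

noncomputable section

/-- For any map `f : X → Y` of finite sets and infinitesimal stochastic
`H : ℝ^X → ℝ^X`, the operator `f_* H f^* : ℝ^Y → ℝ^Y` is infinitesimal stochastic. -/
theorem push_pull_infStoch {X Y : Type} [Fintype X] [Fintype Y]
    [DecidableEq X] [DecidableEq Y]
    (f : X → Y) (H : (X → ℝ) →ₗ[ℝ] (X → ℝ)) (hH : IsInfinitesimalStochastic H) :
    IsInfinitesimalStochastic (pushforward f ∘ₗ H ∘ₗ pullback f) := by
  have key : ∀ j : Y, pullback f (Pi.single j 1) =
      ∑ x ∈ Finset.univ.filter (fun x => f x = j), Pi.single x (1:ℝ) := by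
    intro j
    funext a
    simp only [pullback, LinearMap.coe_mk, AddHom.coe_mk, Function.comp_apply,
      Finset.sum_apply, Pi.single_apply]
    rw [Finset.sum_ite_eq]
    simp
  constructor
  · intro i j hij
    simp only [LinearMap.comp_apply, key, map_sum, pushforward, LinearMap.coe_mk,
      AddHom.coe_mk, Finset.sum_apply]
    apply Finset.sum_nonneg
    intro x hx
    apply Finset.sum_nonneg
    intro a ha
    simp only [Finset.mem_filter] at hx ha
    exact hH.1 a x (by rintro rfl; exact hij (ha.2 ▸ hx.2.symm ▸ rfl))
  · intro j
    simp only [LinearMap.comp_apply, key, map_sum, pushforward, LinearMap.coe_mk,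
      AddHom.coe_mk, Finset.sum_apply]
    rw [Finset.sum_comm]
    apply Finset.sum_eq_zero
    intro x _
    rw [Finset.sum_fiberwise_of_maps_to (fun a _ => Finset.mem_univ (f a))]
    exact hH.2 x

end
end

section
/- Let S →^i (X, H) ←^o T and S' →^{i'} (X', H') ←^{o'} T' be open Markov processes and let f : S → S', p : X → X', g : T → T' be maps such that the squares (i, f, p, i') and (o, g, p, o') commute and are pullbacks, and p_* H = H' p_*. Then for every v ∈ ℝ^X, I ∈ ℝ^S, O ∈ ℝ^T with H(v) + i_*(I) − o_*(O) = 0, one has H'(p_*(v)) + i'_*(f_*(I)) − o'_*(g_*(O)) = 0, together with f_*(i^*(v)) = i'^*(p_*(v)) and g_*(o^*(v)) = o'^*(p_*(v)). Consequently (f_* i^*(v), f_*(I), g_* o^*(v), g_*(O)) lies in the black-boxing of S' →^{i'} (X', H') ←^{o'} T'. -/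
open scoped BigOperators

noncomputable section

lemma pushforward_comp {A B C : Type} [Fintype A] [Fintype B] [DecidableEq B] [DecidableEq C]
    (f : A → B) (g : B → C) (v : A → ℝ) :
    pushforward g (pushforward f v) = pushforward (g ∘ f) v := by
  funext c
  show ∑ b ∈ Finset.univ.filter (fun b => g b = c),
      ∑ a ∈ Finset.univ.filter (fun a => f a = b), v a = _
  rw [Finset.sum_fiberwise_eq_sum_filter]
  show _ = ∑ a ∈ Finset.univ.filter (fun a => g (f a) = c), v a
  refine Finset.sum_congr ?_ fun _ _ => rfl
  ext a
  simp

lemma push_pull_of_pullback {S X S' X' : Type} [Fintype S] [Fintype X]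
    [DecidableEq S'] [DecidableEq X']
    (i : S → X) (f : S → S') (p : X → X') (i' : S' → X')
    (hi : Function.Injective i) (hsq : IsPullbackSquare i f p i') (v : X → ℝ) :
    pushforward f (pullback i v) = pullback i' (pushforward p v) := by
  funext s'
  show ∑ s ∈ Finset.univ.filter (fun s => f s = s'), v (i s)
      = ∑ x ∈ Finset.univ.filter (fun x => p x = i' s'), v x
  refine Finset.sum_bij (fun s _ => i s) ?_ ?_ ?_ ?_
  · intro s hs
    simp only [Finset.mem_filter, Finset.mem_univ, true_and] at hs ⊢
    rw [hsq.1, hs]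
  · intro a _ b _ h
    exact hi h
  · intro x hx
    simp only [Finset.mem_filter, Finset.mem_univ, true_and] at hx
    obtain ⟨s, ⟨hs1, hs2⟩, _⟩ := hsq.2 x s' hx
    exact ⟨s, by simp [hs2], hs1⟩
  · intro s _; rfl

/-- A morphism of open Markov processes sends steady states (with
inflows and outflows) to steady states; consequently it maps black-boxing data of the
source into the black-boxing of the target. -/
theorem morphism_preserves_steady_states
    {S X T S' X' T' : Type}
    [Fintype S] [Fintype X] [Fintype T] [Fintype S'] [Fintype X'] [Fintype T']
    [DecidableEq X] [DecidableEq X'] [DecidableEq S'] [DecidableEq T']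
    (i : S → X) (o : T → X) (hi : Function.Injective i) (ho : Function.Injective o)
    (H : (X → ℝ) →ₗ[ℝ] (X → ℝ)) (hH : IsInfinitesimalStochastic H)
    (i' : S' → X') (o' : T' → X')
    (hi' : Function.Injective i') (ho' : Function.Injective o')
    (H' : (X' → ℝ) →ₗ[ℝ] (X' → ℝ)) (hH' : IsInfinitesimalStochastic H')
    (f : S → S') (p : X → X') (g : T → T')
    (hsq1 : IsPullbackSquare i f p i') (hsq2 : IsPullbackSquare o g p o')
    (hcomm : pushforward p ∘ₗ H = H' ∘ₗ pushforward p)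
    (v : X → ℝ) (I : S → ℝ) (O : T → ℝ)
    (hsteady : H v + pushforward i I - pushforward o O = 0) :
    H' (pushforward p v) + pushforward i' (pushforward f I)
        - pushforward o' (pushforward g O) = 0 ∧
    pushforward f (pullback i v) = pullback i' (pushforward p v) ∧
    pushforward g (pullback o v) = pullback o' (pushforward p v) ∧
    (pushforward f (pullback i v), pushforward f I,
      pushforward g (pullback o v), pushforward g O) ∈ blackBox i' o' H' := by
  have hfi : (i' ∘ f) = (p ∘ i) := funext fun s => (hsq1.1 s).symm
  have hgo : (o' ∘ g) = (p ∘ o) := funext fun t => (hsq2.1 t).symm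
  have hsteady' : H' (pushforward p v) + pushforward i' (pushforward f I)
      - pushforward o' (pushforward g O) = 0 := by
    have h0 := congrArg (pushforward p) hsteady
    rw [map_sub, map_add, map_zero] at h0
    rw [pushforward_comp f i', pushforward_comp g o', hfi, hgo,
      ← pushforward_comp i p, ← pushforward_comp o p]
    have hc : pushforward p (H v) = H' (pushforward p v) := LinearMap.congr_fun hcomm v
    rw [← hc]
    exact h0
  have h2 := push_pull_of_pullback i f p i' hi hsq1 v
  have h3 := push_pull_of_pullback o g p o' ho hsq2 v
  exact ⟨hsteady', h2, h3,
    ⟨pushforward p v, pushforward f I, pushforward g O, hsteady', by rw [h2, h3]⟩⟩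

end
end

section
/- The black-boxing of an open Markov process S →^i (X, H) ←^o T is a linear subspace of ℝ^S ⊕ ℝ^S ⊕ ℝ^T ⊕ ℝ^T. -/
open scoped BigOperators

noncomputable section

/-- The black-boxing of an open Markov process is a linear subspace of
`ℝ^S ⊕ ℝ^S ⊕ ℝ^T ⊕ ℝ^T`. -/
theorem blackBox_isLinearSubspace {S X T : Type}
    [Fintype S] [Fintype X] [Fintype T] [DecidableEq X]
    (i : S → X) (o : T → X) (hi : Function.Injective i) (ho : Function.Injective o)
    (H : (X → ℝ) →ₗ[ℝ] (X → ℝ)) (hH : IsInfinitesimalStochastic H) :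
    ∃ W : Submodule ℝ ((S → ℝ) × (S → ℝ) × (T → ℝ) × (T → ℝ)),
      (W : Set ((S → ℝ) × (S → ℝ) × (T → ℝ) × (T → ℝ))) = blackBox i o H := by
  classical
  -- F (v, I, O) = H v + i_* I - o_* O
  let F : ((X → ℝ) × (S → ℝ) × (T → ℝ)) →ₗ[ℝ] (X → ℝ) :=
    H ∘ₗ LinearMap.fst ℝ _ _ +
      (pushforward i ∘ₗ LinearMap.fst ℝ (S → ℝ) (T → ℝ) ∘ₗ LinearMap.snd ℝ _ _) -
      (pushforward o ∘ₗ LinearMap.snd ℝ (S → ℝ) (T → ℝ) ∘ₗ LinearMap.snd ℝ _ _)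
  -- L (v, I, O) = (i^* v, I, o^* v, O)
  let L : ((X → ℝ) × (S → ℝ) × (T → ℝ)) →ₗ[ℝ] ((S → ℝ) × (S → ℝ) × (T → ℝ) × (T → ℝ)) :=
    LinearMap.prod (pullback i ∘ₗ LinearMap.fst ℝ _ _)
      (LinearMap.prod (LinearMap.fst ℝ (S → ℝ) (T → ℝ) ∘ₗ LinearMap.snd ℝ _ _)
        (LinearMap.prod (pullback o ∘ₗ LinearMap.fst ℝ _ _)
          (LinearMap.snd ℝ (S → ℝ) (T → ℝ) ∘ₗ LinearMap.snd ℝ _ _)))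
  refine ⟨(LinearMap.ker F).map L, ?_⟩
  ext w
  constructor
  · rintro ⟨⟨v, I, O⟩, hker, rfl⟩
    exact ⟨v, I, O, hker, rfl⟩
  · rintro ⟨v, I, O, heq, rfl⟩
    exact ⟨(v, I, O), heq, rfl⟩

end
end

section
/- Let S →^i (X, H) ←^o T and T →^{i'} (Y, G) ←^{o'} U be composable open Markov processes, and let j : X → Z, k : Y → Z exhibit Z as a pushout of o : T → X and i' : T → Y. Suppose w ∈ ℝ^Z, I ∈ ℝ^S, O' ∈ ℝ^U satisfy (H ⊙ G)(w) + (j∘i)_*(I) − (k∘o')_*(O') = 0, where H ⊙ G = j_* H j^* + k_* G k^*. Set v = j^*(w) and v' = k^*(w). Then o^*(v) = i'^*(v'), and there exists O ∈ ℝ^T such that H(v) + i_*(I) − o_*(O) = 0 and G(v') + i'_*(O) − o'_*(O') = 0. -/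
open scoped BigOperators

noncomputable section

lemma pushforward_apply {A B : Type} [Fintype A] [DecidableEq B] (f : A → B) (v : A → ℝ)
    (b : B) : pushforward f v b = ∑ a ∈ Finset.univ.filter (fun a => f a = b), v a := rfl

lemma pushforward_apply_of_inj {A B : Type} [Fintype A] [DecidableEq B] {f : A → B}
    (hf : Function.Injective f) (v : A → ℝ) (a : A) : pushforward f v (f a) = v a := by
  rw [pushforward_apply]
  have : Finset.univ.filter (fun a' => f a' = f a) = {a} := by
    ext x; simp [hf.eq_iff]
  rw [this, Finset.sum_singleton]

lemma pushforward_apply_of_not_mem {A B : Type} [Fintype A] [DecidableEq B] {f : A → B}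
    (v : A → ℝ) {b : B} (hb : ∀ a, f a ≠ b) : pushforward f v b = 0 := by
  rw [pushforward_apply]
  apply Finset.sum_eq_zero
  intro a ha
  simp only [Finset.mem_filter] at ha
  exact absurd ha.2 (hb a)

lemma pullback_apply {A B : Type} (f : A → B) (v : B → ℝ) (a : A) :
    pullback f v a = v (f a) := rfl

/-- A steady state of the composite of two open Markov processes
restricts to compatible steady states of the pieces, for a suitable flow `O` on the
common boundary. -/
theorem composite_steady_state_restricts
    {S X T Y U Z : Type}
    [Fintype S] [Fintype X] [Fintype T] [Fintype Y] [Fintype U]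
    [DecidableEq X] [DecidableEq Y] [DecidableEq Z]
    (i : S → X) (o : T → X) (hi : Function.Injective i) (ho : Function.Injective o)
    (H : (X → ℝ) →ₗ[ℝ] (X → ℝ)) (hH : IsInfinitesimalStochastic H)
    (i' : T → Y) (o' : U → Y) (hi' : Function.Injective i') (ho' : Function.Injective o')
    (G : (Y → ℝ) →ₗ[ℝ] (Y → ℝ)) (hG : IsInfinitesimalStochastic G)
    (j : X → Z) (k : Y → Z) (hpo : IsPushoutSquare o i' j k)
    (w : Z → ℝ) (I : S → ℝ) (O' : U → ℝ)
    (hw : (pushforward j ∘ₗ H ∘ₗ pullback j + pushforward k ∘ₗ G ∘ₗ pullback k) w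
        + pushforward (j ∘ i) I - pushforward (k ∘ o') O' = 0) :
    pullback o (pullback j w) = pullback i' (pullback k w) ∧
    ∃ O : T → ℝ,
      H (pullback j w) + pushforward i I - pushforward o O = 0 ∧
      G (pullback k w) + pushforward i' O - pushforward o' O' = 0 := by
  classical
  obtain ⟨hcomm, huniv⟩ := hpo
  -- Build a test map to a concrete pushout candidate `X ⊕ Y`.
  set u' : Y → X ⊕ Y := fun y =>
    if h : ∃ t, i' t = y then Sum.inl (o h.choose) else Sum.inr y with hu'
  have hcompat : ∀ t, Sum.inl (o t) = u' (i' t) := by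
    intro t
    have h : ∃ t', i' t' = i' t := ⟨t, rfl⟩
    have : h.choose = t := hi' h.choose_spec
    simp [hu', dif_pos h, this]
  obtain ⟨w', ⟨hwj, hwk⟩, -⟩ := huniv (X ⊕ Y) Sum.inl u' hcompat
  -- j is injective
  have hj_inj : Function.Injective j := by
    intro x x' h
    have := congrArg w' h
    rw [hwj, hwj] at this
    exact Sum.inl_injective this
  -- structure of intersections
  have hc : ∀ x y, j x = k y → ∃ t, o t = x ∧ i' t = y := by
    intro x y h
    have hxy : Sum.inl x = u' y := by rw [← hwj x, ← hwk y, h]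
    by_cases hy : ∃ t, i' t = y
    · refine ⟨hy.choose, ?_, hy.choose_spec⟩
      rw [hu'] at hxy
      simp only [dif_pos hy] at hxy
      exact (Sum.inl_injective hxy).symm
    · rw [hu'] at hxy
      simp only [dif_neg hy] at hxy
      exact absurd hxy (by simp)
  -- k is injective
  have hk_inj : Function.Injective k := by
    intro y y' h
    have h1 : u' y = u' y' := by rw [← hwk y, ← hwk y', h]
    simp only [hu'] at h1
    by_cases hy : ∃ t, i' t = y <;> by_cases hy' : ∃ t, i' t = y'
    · simp only [dif_pos hy, dif_pos hy'] at h1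
      have := ho (Sum.inl_injective h1)
      rw [← hy.choose_spec, ← hy'.choose_spec, this]
    · simp only [dif_pos hy, dif_neg hy'] at h1
      exact absurd h1 (by simp)
    · simp only [dif_neg hy, dif_pos hy'] at h1
      exact absurd h1 (by simp)
    · simp only [dif_neg hy, dif_neg hy'] at h1
      exact Sum.inr_injective h1
  set v : X → ℝ := pullback j w with hv
  set v' : Y → ℝ := pullback k w with hv'
  -- the pointwise steady-state equation
  have hz : ∀ z : Z, pushforward j (H v) z + pushforward k (G v') z
      + pushforward (j ∘ i) I z - pushforward (k ∘ o') O' z = 0 := by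
    intro z
    have h := congrFun hw z
    simpa [Pi.add_apply, Pi.sub_apply, LinearMap.add_apply] using h
  refine ⟨?_, ?_⟩
  · funext t
    show w (j (o t)) = w (k (i' t))
    rw [hcomm t]
  set O : T → ℝ := fun t => H v (o t) + pushforward i I (o t) with hO
  refine ⟨O, ?_, ?_⟩
  · funext x
    simp only [Pi.add_apply, Pi.sub_apply, Pi.zero_apply]
    by_cases hx : ∃ t, o t = x
    · obtain ⟨t, rfl⟩ := hx
      rw [pushforward_apply_of_inj ho O t]
      simp only [hO]
      ring
    · push_neg at hx
      rw [pushforward_apply_of_not_mem O hx]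
      have h1 := hz (j x)
      rw [pushforward_apply_of_inj hj_inj (H v) x] at h1
      rw [pushforward_apply_of_not_mem (G v') (fun y hy => by
        obtain ⟨t, ht1, _⟩ := hc x y hy.symm; exact hx t ht1)] at h1
      rw [pushforward_apply_of_not_mem O' (fun u hu => by
        obtain ⟨t, ht1, _⟩ := hc x (o' u) hu.symm; exact hx t ht1)] at h1
      have h2 : pushforward (j ∘ i) I (j x) = pushforward i I x := by
        rw [pushforward_apply, pushforward_apply]
        apply Finset.sum_congr _ (fun _ _ => rfl)
        ext s; simp [Function.comp, hj_inj.eq_iff]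
      rw [h2] at h1
      linarith
  · funext y
    simp only [Pi.add_apply, Pi.sub_apply, Pi.zero_apply]
    have h1 := hz (k y)
    rw [pushforward_apply_of_inj hk_inj (G v') y] at h1
    have h4 : pushforward (k ∘ o') O' (k y) = pushforward o' O' y := by
      rw [pushforward_apply, pushforward_apply]
      apply Finset.sum_congr _ (fun _ _ => rfl)
      ext u; simp [Function.comp, hk_inj.eq_iff]
    rw [h4] at h1
    by_cases hy : ∃ t, i' t = y
    · obtain ⟨t, rfl⟩ := hy
      rw [pushforward_apply_of_inj hi' O t]
      simp only [hO]
      have h2 : pushforward j (H v) (k (i' t)) = H v (o t) := by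
        rw [← hcomm t]
        exact pushforward_apply_of_inj hj_inj (H v) (o t)
      have h3 : pushforward (j ∘ i) I (k (i' t)) = pushforward i I (o t) := by
        rw [pushforward_apply, pushforward_apply]
        apply Finset.sum_congr _ (fun _ _ => rfl)
        ext s
        simp only [Finset.mem_filter, Finset.mem_univ, true_and, Function.comp]
        constructor
        · intro h
          obtain ⟨t', ht1, ht2⟩ := hc (i s) (i' t) h
          rw [← ht1, hi' ht2]
        · intro h
          rw [h, hcomm t]
      rw [h2, h3] at h1
      linarith
    · push_neg at hy
      rw [pushforward_apply_of_not_mem O hy]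
      rw [pushforward_apply_of_not_mem (H v) (fun x hx => by
        obtain ⟨t, _, ht2⟩ := hc x y hx; exact hy t ht2)] at h1
      rw [pushforward_apply_of_not_mem I (fun s hs => by
        obtain ⟨t, _, ht2⟩ := hc (i s) y hs; exact hy t ht2)] at h1
      linarith

end
end
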